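/- Let P_1, …, P_ℓ and Q be distributions on a common finite sample space, and let φ be a function on that space with values in the real interval [a,b] where a < b. Let η_1 ≥ 0 and 0 ≤ η_2 ≤ b − a, and assume that for each i ∈ [ℓ], either the total variation distance between P_i and Q is at least 1 − η_1, or E_{X~Q}[φ(X)] − E_{X~P_i}[φ(X)] ≥ η_2. Then for any distribution P expressible as a convex combination of P_1, …, P_ℓ, the total variation distance between P and Q is at least η_2/(b−a) − (ℓ+1)·η_1. -/

import Mathlib

open Finset

def tow : ℕ → ℕ
  | 0 => 1
  | x + 1 => 2 ^ tow x

def hw {ι : Type*} [Fintype ι] (x : ι → Bool) : ℕ :=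
  (Finset.univ.filter fun i => x i = true).card

def IsLocal {κ ι : Type*} (d : ℕ) (f : (κ → Bool) → ι → Bool) : Prop :=
  ∀ i : ι, ∃ T : Finset κ, T.card ≤ d ∧
    ∀ x y : κ → Bool, (∀ j ∈ T, x j = y j) → f x i = f y i

def IsProductDist {κ : Type*} [Fintype κ] (p : (κ → Bool) → ℝ) : Prop :=
  ∃ γ : κ → ℝ, (∀ j, 0 ≤ γ j ∧ γ j ≤ 1) ∧
    ∀ x, p x = ∏ j, if x j then γ j else 1 - γ j

def IsDist {α : Type*} [Fintype α] (p : α → ℝ) : Prop :=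
  (∀ a, 0 ≤ p a) ∧ ∑ a, p a = 1

noncomputable def push {α β : Type*} [Fintype α] [DecidableEq β] (f : α → β) (p : α → ℝ) :
    β → ℝ :=
  fun b => ∑ a, if f a = b then p a else 0

noncomputable def tv {α : Type*} [Fintype α] (p q : α → ℝ) : ℝ :=
  (1 / 2) * ∑ a, |p a - q a|

noncomputable def biased {ι : Type*} [Fintype ι] (γ : ℝ) (x : ι → Bool) : ℝ :=
  ∏ i, if x i then γ else 1 - γ

noncomputable def unifParity (ι : Type*) [Fintype ι] [DecidableEq ι] (b : ℕ)
    (y : ι → Bool) : ℝ :=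
  if hw y % 2 = b then
    (1 : ℝ) / ((Finset.univ.filter fun z : ι → Bool => hw z % 2 = b).card : ℝ)
  else 0

noncomputable def dHard (n m : ℕ) (p : (Fin n → Bool) × (Fin m → Bool)) : ℝ :=
  biased (1 / 4) p.1 *
    (if hw p.1 % 2 = 1 then (1 / 2 : ℝ) ^ m
     else unifParity (Fin m) ((hw p.1 / 2) % 2) p.2)

def splitFun (n m : ℕ) (z : Fin (n + m) → Bool) : (Fin n → Bool) × (Fin m → Bool) :=
  (fun i => z (Fin.castAdd m i), fun j => z (Fin.natAdd n j))

noncomputable def dHard' (n m : ℕ) (z : Fin (n + m) → Bool) : ℝ :=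
  dHard n m (splitFun n m z)

def wOf {V : Type*} (Z : V → Bool) : Sym2 V → Bool :=
  Sym2.lift ⟨fun u v => xor (Z u) (Z v), fun u v => Bool.xor_comm _ _⟩

def ip {V : Type*} [Fintype V] (Z X : V → Bool) : ℕ :=
  (Finset.univ.filter fun v => Z v = true ∧ X v = true).card

noncomputable def dHost {V : Type*} [Fintype V] [DecidableEq V] (G : SimpleGraph V)
    [DecidableRel G.Adj] (z : (V ⊕ V ⊕ G.edgeSet) → Bool) : ℝ :=
  let X : V → Bool := fun v => z (Sum.inl v)
  let Y : V → Bool := fun v => z (Sum.inr (Sum.inl v))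
  let W : G.edgeSet → Bool := fun e => z (Sum.inr (Sum.inr e))
  biased (1 / 4) X *
    ∑ Z : V → Bool,
      (1 / 2 : ℝ) ^ (Fintype.card V) *
        (if ∀ e : G.edgeSet, W e = wOf Z e.1 then 1 else 0) *
        (if hw X % 2 = 1 then (1 / 2 : ℝ) ^ (Fintype.card V)
         else unifParity V ((ip Z X + hw X / 2) % 2) Y)

lemma aux_sum_biUnion_le {ι α : Type*} [DecidableEq α] (s : Finset ι) (t : ι → Finset α)
    (f : α → ℝ) (hf : ∀ x, 0 ≤ f x) :
    ∑ x ∈ s.biUnion t, f x ≤ ∑ i ∈ s, ∑ x ∈ t i, f x := by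
  classical
  induction s using Finset.induction with
  | empty => simp
  | insert a s ha ih =>
    rw [Finset.biUnion_insert, Finset.sum_insert ha]
    have h1 : ∑ x ∈ t a ∪ s.biUnion t, f x ≤ (∑ x ∈ t a, f x) + ∑ x ∈ s.biUnion t, f x := by
      have := Finset.sum_union_inter (s₁ := t a) (s₂ := s.biUnion t) (f := f)
      have h2 : 0 ≤ ∑ x ∈ t a ∩ s.biUnion t, f x := Finset.sum_nonneg fun x _ => hf x
      linarith
    exact h1.trans (by linarith)

lemma aux_sum_max_eq_tv {α : Type*} [Fintype α] (p q : α → ℝ)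
    (hp : ∑ x, p x = 1) (hq : ∑ x, q x = 1) :
    ∑ x, max (p x - q x) 0 = tv p q := by
  have h1 : ∀ x, max (p x - q x) 0 = (|p x - q x| + (p x - q x)) / 2 := by
    intro x
    rcases le_or_gt (p x - q x) 0 with h | h
    · rw [max_eq_right h, abs_of_nonpos h]; ring
    · rw [max_eq_left h.le, abs_of_pos h]; ring
  simp only [h1]
  rw [← Finset.sum_div, Finset.sum_add_distrib, Finset.sum_sub_distrib, hp, hq]
  simp [tv]
  ring

lemma aux_tv_ge {α : Type*} [Fintype α] (p q : α → ℝ)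
    (hp : ∑ x, p x = 1) (hq : ∑ x, q x = 1)
    (f : α → ℝ) (hf0 : ∀ x, 0 ≤ f x) (hf1 : ∀ x, f x ≤ 1) :
    ∑ x, (p x - q x) * f x ≤ tv p q := by
  rw [← aux_sum_max_eq_tv p q hp hq]
  refine Finset.sum_le_sum fun x _ => ?_
  rcases le_or_gt (p x - q x) 0 with h | h
  · calc (p x - q x) * f x ≤ 0 := mul_nonpos_of_nonpos_of_nonneg h (hf0 x)
      _ ≤ max (p x - q x) 0 := le_max_right _ _
  · calc (p x - q x) * f x ≤ (p x - q x) * 1 := mul_le_mul_of_nonneg_left (hf1 x) h.le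
      _ = p x - q x := mul_one _
      _ ≤ max (p x - q x) 0 := le_max_left _ _

lemma aux_tv_filter {α : Type*} [Fintype α] (p q : α → ℝ)
    (hp : ∑ x, p x = 1) (hq : ∑ x, q x = 1) [DecidablePred fun x => q x < p x] :
    ∑ x ∈ Finset.univ.filter (fun x => q x < p x), (p x - q x) = tv p q := by
  rw [← aux_sum_max_eq_tv p q hp hq, Finset.sum_filter]
  refine Finset.sum_congr rfl fun x _ => ?_
  rcases le_or_gt (p x) (q x) with h | h
  · rw [if_neg (not_lt.mpr h), max_eq_right (by linarith)]
  · rw [if_pos h, max_eq_left (by linarith)]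

theorem stmt14 {α : Type*} [Fintype α] (l : ℕ) (P : Fin l → α → ℝ) (Q : α → ℝ)
    (hP : ∀ i, IsDist (P i)) (hQ : IsDist Q)
    (φ : α → ℝ) (a b : ℝ) (hab : a < b) (hφ : ∀ x, φ x ∈ Set.Icc a b)
    (η₁ η₂ : ℝ) (hη₁ : 0 ≤ η₁) (hη₂0 : 0 ≤ η₂) (hη₂ : η₂ ≤ b - a)
    (halt : ∀ i : Fin l,
      1 - η₁ ≤ tv (P i) Q ∨ η₂ ≤ (∑ x, Q x * φ x) - ∑ x, P i x * φ x)
    (w : Fin l → ℝ) (hw : ∀ i, 0 ≤ w i) (hw1 : ∑ i, w i = 1) :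
    η₂ / (b - a) - ((l : ℝ) + 1) * η₁ ≤ tv (fun x => ∑ i, w i * P i x) Q := by
  classical
  obtain ⟨hQ0, hQ1⟩ := hQ
  have hba : (0 : ℝ) < b - a := sub_pos.mpr hab
  have hratio1 : η₂ / (b - a) ≤ 1 := (div_le_one hba).mpr hη₂
  set c : ℝ := η₂ / (b - a) - ((l : ℝ) + 1) * η₁ with hc
  have hP'1 : ∑ x, ∑ i, w i * P i x = 1 := by
    rw [Finset.sum_comm]
    calc ∑ i, ∑ x, w i * P i x = ∑ i, w i * ∑ x, P i x := by
          simp [Finset.mul_sum]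
      _ = 1 := by simp only [(hP _).2, mul_one]; exact hw1
  -- key reduction: exhibit a test function f : α → [0,1]
  have key : ∀ f : α → ℝ, (∀ x, 0 ≤ f x) → (∀ x, f x ≤ 1) →
      (∀ i, c ≤ (∑ x, P i x * f x) - ∑ x, Q x * f x) →
      c ≤ tv (fun x => ∑ i, w i * P i x) Q := by
    intro f hf0 hf1 hdiff
    have e1 : ∑ x, ((∑ i, w i * P i x) - Q x) * f x
        = (∑ i, w i * ∑ x, P i x * f x) - ∑ x, Q x * f x := by
      simp only [sub_mul, Finset.sum_sub_distrib, Finset.sum_mul]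
      rw [Finset.sum_comm]
      simp only [Finset.mul_sum, mul_assoc]
    have e2 : ∑ i, w i * ((∑ x, P i x * f x) - ∑ x, Q x * f x)
        = (∑ i, w i * ∑ x, P i x * f x) - ∑ x, Q x * f x := by
      simp only [mul_sub, Finset.sum_sub_distrib, ← Finset.sum_mul, hw1, one_mul]
    calc c = (∑ i, w i) * c := by rw [hw1, one_mul]
      _ = ∑ i, w i * c := by rw [Finset.sum_mul]
      _ ≤ ∑ i, w i * ((∑ x, P i x * f x) - ∑ x, Q x * f x) :=
          Finset.sum_le_sum fun i _ => mul_le_mul_of_nonneg_left (hdiff i) (hw i)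
      _ = ∑ x, ((∑ i, w i * P i x) - Q x) * f x := by rw [e2, e1]
      _ ≤ tv (fun x => ∑ i, w i * P i x) Q := aux_tv_ge _ _ hP'1 hQ1 f hf0 hf1
  -- the sets S i, A, U
  set S : Fin l → Finset α := fun i => Finset.univ.filter (fun x => Q x < P i x) with hSdef
  have hStv : ∀ i, ∑ x ∈ S i, (P i x - Q x) = tv (P i) Q := fun i =>
    aux_tv_filter (P i) Q (hP i).2 hQ1
  have hSsub : ∀ i, ∑ x ∈ S i, P i x - ∑ x ∈ S i, Q x = tv (P i) Q := by
    intro i; rw [← Finset.sum_sub_distrib]; exact hStv i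
  have hSQ : ∀ i, 1 - η₁ ≤ tv (P i) Q → ∑ x ∈ S i, Q x ≤ η₁ := by
    intro i hi
    have h1 : ∑ x ∈ S i, P i x ≤ 1 := by
      rw [← (hP i).2]
      exact Finset.sum_le_sum_of_subset_of_nonneg (Finset.subset_univ _)
        fun x _ _ => (hP i).1 x
    have h2 := hSsub i
    linarith
  have hSP : ∀ i, 1 - η₁ ≤ tv (P i) Q → 1 - η₁ ≤ ∑ x ∈ S i, P i x := by
    intro i hi
    have h2 := hSsub i
    have h3 : 0 ≤ ∑ x ∈ S i, Q x := Finset.sum_nonneg fun x _ => hQ0 x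
    linarith
  set A : Finset (Fin l) := Finset.univ.filter (fun i => 1 - η₁ ≤ tv (P i) Q) with hAdef
  set U : Finset α := A.biUnion S with hUdef
  have hQU : ∑ x ∈ U, Q x ≤ (l : ℝ) * η₁ := by
    calc ∑ x ∈ U, Q x ≤ ∑ i ∈ A, ∑ x ∈ S i, Q x := aux_sum_biUnion_le _ _ _ hQ0
      _ ≤ ∑ i ∈ A, η₁ := Finset.sum_le_sum fun i hi => hSQ i (Finset.mem_filter.mp hi).2
      _ = (A.card : ℝ) * η₁ := by rw [Finset.sum_const, nsmul_eq_mul]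
      _ ≤ (l : ℝ) * η₁ := by
          have : (A.card : ℝ) ≤ (l : ℝ) := by
            exact_mod_cast (Finset.card_le_univ A).trans_eq (by simp)
          exact mul_le_mul_of_nonneg_right this hη₁
  have hPU : ∀ i ∈ A, 1 - η₁ ≤ ∑ x ∈ U, P i x := by
    intro i hi
    refine (hSP i (Finset.mem_filter.mp hi).2).trans ?_
    exact Finset.sum_le_sum_of_subset_of_nonneg (Finset.subset_biUnion_of_mem S hi)
      fun x _ _ => (hP i).1 x
  have hind : ∀ p : α → ℝ, ∑ x, p x * (if x ∈ U then 1 else 0) = ∑ x ∈ U, p x := by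
    intro p
    simp [mul_ite, mul_one, mul_zero, Finset.sum_ite_mem]
  -- the scaled test ψ
  set ψ : α → ℝ := fun x => (b - φ x) / (b - a) with hψdef
  have hψ0 : ∀ x, 0 ≤ ψ x := fun x => div_nonneg (by linarith [(hφ x).2]) hba.le
  have hψ1 : ∀ x, ψ x ≤ 1 := fun x => (div_le_one hba).mpr (by linarith [(hφ x).1])
  have hEψ : ∀ p : α → ℝ, ∑ x, p x = 1 →
      ∑ x, p x * ψ x = (b - ∑ x, p x * φ x) / (b - a) := by
    intro p hp
    rw [eq_div_iff hba.ne', Finset.sum_mul]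
    have h1 : ∀ x ∈ Finset.univ, p x * ψ x * (b - a) = p x * b - p x * φ x := by
      intro x _
      simp only [hψdef]
      field_simp
    rw [Finset.sum_congr rfl h1, Finset.sum_sub_distrib, ← Finset.sum_mul, hp, one_mul]
  have hEψle1 : ∀ p : α → ℝ, (∀ x, 0 ≤ p x) → ∑ x, p x = 1 → ∑ x, p x * ψ x ≤ 1 := by
    intro p hp0 hp1
    calc ∑ x, p x * ψ x ≤ ∑ x, p x * 1 :=
        Finset.sum_le_sum fun x _ => mul_le_mul_of_nonneg_left (hψ1 x) (hp0 x)
      _ = 1 := by simpa using hp1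
  have hB : ∀ i, i ∉ A → η₂ / (b - a) ≤ (∑ x, P i x * ψ x) - ∑ x, Q x * ψ x := by
    intro i hi
    have hi' : ¬(1 - η₁ ≤ tv (P i) Q) := by
      intro h; exact hi (Finset.mem_filter.mpr ⟨Finset.mem_univ _, h⟩)
    have h2 := (halt i).resolve_left hi'
    rw [hEψ (P i) (hP i).2, hEψ Q hQ1, div_sub_div_same]
    have h3 : η₂ ≤ (b - ∑ x, P i x * φ x) - (b - ∑ x, Q x * φ x) := by linarith
    exact div_le_div_of_nonneg_right h3 hba.le  -- maybe wrong name
  by_cases hall : ∀ i : Fin l, i ∈ A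
  · -- all distributions are TV-far: indicator test
    refine key (fun x => if x ∈ U then 1 else 0) (fun x => by positivity)
      (fun x => by split <;> norm_num) ?_
    intro i
    rw [hind (P i), hind Q]
    have h1 := hPU i (hall i)
    rw [hc]
    linarith
  · push_neg at hall
    obtain ⟨i₀, hi₀⟩ := hall
    have hEQψ : ∑ x, Q x * ψ x ≤ 1 - η₂ / (b - a) := by
      have h1 := hB i₀ hi₀
      have h2 := hEψle1 (P i₀) (hP i₀).1 (hP i₀).2
      linarith
    set f : α → ℝ := fun x => max (ψ x) (if x ∈ U then 1 else 0) with hfdef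
    have hf0 : ∀ x, 0 ≤ f x := fun x => (hψ0 x).trans (le_max_left _ _)
    have hf1 : ∀ x, f x ≤ 1 := fun x => max_le (hψ1 x) (by split <;> norm_num)
    have hfle : ∀ x, f x ≤ ψ x + (if x ∈ U then 1 else 0) := by
      intro x
      refine max_le (by split <;> [linarith; simp]) ?_
      split
      · linarith [hψ0 x]
      · simpa using hψ0 x
    have hQf : ∑ x, Q x * f x ≤ (∑ x, Q x * ψ x) + ∑ x ∈ U, Q x := by
      calc ∑ x, Q x * f x ≤ ∑ x, (Q x * ψ x + Q x * (if x ∈ U then 1 else 0)) := by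
            refine Finset.sum_le_sum fun x _ => ?_
            have h := mul_le_mul_of_nonneg_left (hfle x) (hQ0 x)
            linarith [h, (mul_add (Q x) (ψ x) (if x ∈ U then 1 else 0))]
        _ = (∑ x, Q x * ψ x) + ∑ x ∈ U, Q x := by
            rw [Finset.sum_add_distrib, hind Q]
    have hPfψ : ∀ i, ∑ x, P i x * ψ x ≤ ∑ x, P i x * f x := fun i =>
      Finset.sum_le_sum fun x _ => mul_le_mul_of_nonneg_left (le_max_left _ _) ((hP i).1 x)
    have hPfU : ∀ i, ∑ x ∈ U, P i x ≤ ∑ x, P i x * f x := by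
      intro i
      rw [← hind (P i)]
      exact Finset.sum_le_sum fun x _ =>
        mul_le_mul_of_nonneg_left (le_max_right _ _) ((hP i).1 x)
    refine key f hf0 hf1 ?_
    intro i
    by_cases hiA : i ∈ A
    · have h1 := hPU i hiA
      have h2 := hPfU i
      rw [hc]
      linarith
    · have h1 := hB i hiA
      have h2 := hPfψ i
      rw [hc]
      linarith
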